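/- Let n ≥ 2 be an integer, β ≥ n − 1/2, R > 1, and let ρ and u be defined by ρ(r) = δ(R)/2 + (β δ(R) r/2)·((R/r)^(2n−2) Γ(R/r))/((R/r)^(n−1) − 1) − (δ(R) r/(2n))·(β − (n−1)/R)·((R/r)^n − 1)/((R/r)^(n−1) − 1) and u(r) = δ(R)·[1 + β r (R/r)^(n−1) Γ(R/r)] for 1 ≤ r < R. Then ρ(r) ≤ u(r) for all r ∈ [1, R). -/

import Mathlib

noncomputable def Gam (n : ℕ) (r : ℝ) : ℝ :=
  if n = 2 then Real.log r else (1 / ((n : ℝ) - 2)) * (1 - r ^ ((2 : ℝ) - (n : ℝ)))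

noncomputable def del (n : ℕ) (β r : ℝ) : ℝ :=
  1 / (1 + β * r ^ ((n : ℝ) - 1) * Gam n r)

lemma gam_nonneg (n : ℕ) (hn : 2 ≤ n) {s : ℝ} (hs : 1 ≤ s) : 0 ≤ Gam n s := by
  unfold Gam
  split_ifs with h
  · exact Real.log_nonneg hs
  · have hn3 : 3 ≤ n := by omega
    have h2 : (0:ℝ) < (n:ℝ) - 2 := by
      have : (3:ℝ) ≤ (n:ℝ) := by exact_mod_cast hn3
      linarith
    have hx : s ^ ((2:ℝ) - (n:ℝ)) ≤ 1 :=
      Real.rpow_le_one_of_one_le_of_nonpos hs (by linarith)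
    have := one_div_pos.mpr h2
    nlinarith

lemma gam_key (n : ℕ) (hn : 2 ≤ n) {s : ℝ} (hs : 1 < s) :
    (n : ℝ) * Gam n s ≤ s ^ ((n : ℝ)) - 1 := by
  have hs0 : (0:ℝ) < s := by linarith
  unfold Gam
  split_ifs with h
  · subst h
    have hlog : Real.log s ≤ s - 1 := Real.log_le_sub_one_of_pos hs0
    have hsq : s ^ (((2:ℕ)):ℝ) = s ^ (2:ℕ) := Real.rpow_natCast s 2
    push_cast at hsq ⊢
    rw [hsq]
    nlinarith [sq_nonneg (s - 1)]
  · have hn3 : 3 ≤ n := by omega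
    have h2 : (0:ℝ) < (n:ℝ) - 2 := by
      have : (3:ℝ) ≤ (n:ℝ) := by exact_mod_cast hn3
      linarith
    set x := s ^ ((2:ℝ) - (n:ℝ)) with hxdef
    set p := s ^ ((n:ℝ)) with hpdef
    have hx0 : 0 ≤ x := (Real.rpow_nonneg hs0.le _)
    have hp0 : 0 ≤ p := (Real.rpow_nonneg hs0.le _)
    -- AM-GM: weights w1 = (n-2)/(2n-2), w2 = n/(2n-2)
    have hden : (0:ℝ) < 2*(n:ℝ) - 2 := by linarith
    have hw1 : (0:ℝ) ≤ ((n:ℝ)-2)/(2*(n:ℝ)-2) := by positivity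
    have hw2 : (0:ℝ) ≤ (n:ℝ)/(2*(n:ℝ)-2) := by positivity
    have hwsum : ((n:ℝ)-2)/(2*(n:ℝ)-2) + (n:ℝ)/(2*(n:ℝ)-2) = 1 := by
      rw [← add_div, div_eq_one_iff_eq hden.ne']
      ring
    have hgm := Real.geom_mean_le_arith_mean2_weighted hw1 hw2 hp0 hx0 hwsum
    have hgmval : p ^ (((n:ℝ)-2)/(2*(n:ℝ)-2)) * x ^ ((n:ℝ)/(2*(n:ℝ)-2)) = 1 := by
      rw [hpdef, hxdef]
      rw [← Real.rpow_mul hs0.le, ← Real.rpow_mul hs0.le, ← Real.rpow_add hs0]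
      rw [show (n:ℝ) * (((n:ℝ)-2)/(2*(n:ℝ)-2)) + ((2:ℝ)-(n:ℝ)) * ((n:ℝ)/(2*(n:ℝ)-2)) = 0 by
        field_simp; ring]
      exact Real.rpow_zero s
    rw [hgmval] at hgm
    rw [div_mul_eq_mul_div, div_mul_eq_mul_div, ← add_div, le_div_iff₀ hden] at hgm
    rw [show (n:ℝ) * (1/((n:ℝ)-2) * (1-x)) = ((n:ℝ)*(1-x))/((n:ℝ)-2) by ring,
      div_le_iff₀ h2]
    nlinarith [hgm]

lemma amgm_B (n : ℕ) (hn : 2 ≤ n) {r R : ℝ} (hr : 0 < r) (hR0 : 0 < R) :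
    (n:ℝ) * R ≤ R * (R/r) ^ ((n:ℝ)-1) + ((n:ℝ)-1) * r := by
  have hn2 : (2:ℝ) ≤ (n:ℝ) := by exact_mod_cast hn
  have hn0 : (0:ℝ) < (n:ℝ) := by linarith
  have hw1 : (0:ℝ) ≤ 1/(n:ℝ) := by positivity
  have hw2 : (0:ℝ) ≤ ((n:ℝ)-1)/(n:ℝ) := div_nonneg (by linarith) hn0.le
  have hp1 : (0:ℝ) ≤ R * (R/r) ^ ((n:ℝ)-1) := by positivity
  have hwsum : 1/(n:ℝ) + ((n:ℝ)-1)/(n:ℝ) = 1 := by field_simp; ring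
  have hgm := Real.geom_mean_le_arith_mean2_weighted hw1 hw2 hp1 hr.le hwsum
  have e1 : R * (R/r) ^ ((n:ℝ)-1) = R ^ (n:ℝ) / r ^ ((n:ℝ)-1) := by
    rw [Real.div_rpow hR0.le hr.le,
      show R ^ (n:ℝ) = R ^ ((n:ℝ)-1) * R from by
        rw [← Real.rpow_add_one hR0.ne', sub_add_cancel]]
    ring
  have e2 : (R ^ (n:ℝ) / r ^ ((n:ℝ)-1)) ^ (1/(n:ℝ)) = R / r ^ (((n:ℝ)-1)/(n:ℝ)) := by
    rw [Real.div_rpow (by positivity) (by positivity), ← Real.rpow_mul hR0.le,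
      ← Real.rpow_mul hr.le, mul_one_div, mul_one_div, div_self hn0.ne', Real.rpow_one]
  have hval : (R * (R/r) ^ ((n:ℝ)-1)) ^ (1/(n:ℝ)) * r ^ (((n:ℝ)-1)/(n:ℝ)) = R := by
    rw [e1, e2, div_mul_cancel₀]
    exact (Real.rpow_pos_of_pos hr _).ne'
  rw [hval] at hgm
  have key := mul_le_mul_of_nonneg_left hgm hn0.le
  have expand : (n:ℝ) * (1/(n:ℝ) * (R * (R/r)^((n:ℝ)-1)) + ((n:ℝ)-1)/(n:ℝ) * r)
      = R * (R/r)^((n:ℝ)-1) + ((n:ℝ)-1) * r := by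
    field_simp
  rw [expand] at key
  exact key

noncomputable def rho (n : ℕ) (β R r : ℝ) : ℝ :=
  del n β R / 2 +
    (β * del n β R * r / 2) *
      ((R / r) ^ (2 * (n : ℝ) - 2) * Gam n (R / r) / ((R / r) ^ ((n : ℝ) - 1) - 1)) -
    (del n β R * r / (2 * n)) * (β - ((n : ℝ) - 1) / R) *
      (((R / r) ^ (n : ℝ) - 1) / ((R / r) ^ ((n : ℝ) - 1) - 1))

noncomputable def uFun (n : ℕ) (β R r : ℝ) : ℝ :=
  del n β R * (1 + β * r * (R / r) ^ ((n : ℝ) - 1) * Gam n (R / r))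

theorem stmt_19 (n : ℕ) (hn : 2 ≤ n) (β R : ℝ) (hβ : (n : ℝ) - 1 / 2 ≤ β) (hR : 1 < R) :
    ∀ r ∈ Set.Ico (1 : ℝ) R, rho n β R r ≤ uFun n β R r := by
  rintro r ⟨hr1, hrR⟩
  have hr0 : (0:ℝ) < r := lt_of_lt_of_le one_pos hr1
  have hR0 : (0:ℝ) < R := lt_trans one_pos hR
  have hn2 : (2:ℝ) ≤ (n:ℝ) := by exact_mod_cast hn
  have hn0 : (0:ℝ) < (n:ℝ) := by linarith
  have hβ0 : (0:ℝ) < β := by linarith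
  set s : ℝ := R / r with hsdef
  have hs1 : 1 < s := (one_lt_div hr0).mpr hrR
  have hs0 : 0 < s := by linarith
  set γ : ℝ := Gam n s with hγdef
  set d : ℝ := del n β R with hddef
  set t : ℝ := s ^ ((n:ℝ)-1) with htdef
  set p : ℝ := s ^ ((n:ℝ)) with hpdef
  have hγ0 : 0 ≤ γ := gam_nonneg n hn hs1.le
  have ht1 : 1 < t := by
    have := (Real.rpow_lt_rpow_left_iff hs1).mpr (show (0:ℝ) < (n:ℝ)-1 by linarith)
    simpa using this
  have htm : 0 < t - 1 := by linarith
  have hA : (n:ℝ) * γ ≤ p - 1 := gam_key n hn hs1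
  have hq : s ^ (2*(n:ℝ)-2) = t^2 := by
    rw [htdef, show 2*(n:ℝ)-2 = ((n:ℝ)-1)*2 by ring, Real.rpow_mul hs0.le, Real.rpow_two]
  have hpt : p = t * s := by
    rw [hpdef, htdef, ← Real.rpow_add_one hs0.ne', sub_add_cancel]
  have hrp : r * p = R * t := by
    rw [hpt, hsdef]
    field_simp
  have hB : (n:ℝ) * R ≤ R * t + ((n:ℝ)-1) * r := by
    have h := amgm_B n hn hr0 hR0
    rw [← hsdef, ← htdef] at h
    exact h
  have hd : 0 < d := by
    rw [hddef]
    unfold del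
    have hΓR : 0 ≤ Gam n R := gam_nonneg n hn hR.le
    have hnn : 0 ≤ β * R ^ ((n:ℝ)-1) * Gam n R := by positivity
    positivity
  simp only [rho, uFun, ← hsdef, ← hγdef, ← hddef, ← htdef, ← hpdef, hq]
  rw [← sub_nonneg]
  have hC : 0 ≤ (n:ℝ)*t*γ*(t-2) + (p-1) := by
    nlinarith [mul_nonneg (mul_nonneg hn0.le hγ0) (sq_nonneg (t-1)), hA]
  have hrp2 : (n:ℝ)*(r*p) = (n:ℝ)*(R*t) := by rw [hrp]
  have hE : 0 ≤ 2*(n:ℝ)*R*(t-1)*(1+β*r*t*γ) -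
      ((n:ℝ)*R*(t-1) + (n:ℝ)*β*r*R*t^2*γ - r*(β*R-((n:ℝ)-1))*(p-1)) := by
    nlinarith [hB, mul_nonneg (mul_nonneg (mul_nonneg hβ0.le hr0.le) hR0.le) hC, hrp, hrp2]
  have hfac : d * (1 + β*r*t*γ) -
      (d / 2 + β * d * r / 2 * (t^2 * γ / (t - 1)) -
        d * r / (2 * (n:ℝ)) * (β - ((n:ℝ) - 1) / R) * ((p - 1) / (t - 1)))
      = d / (2*(n:ℝ)*R*(t-1)) *
        (2*(n:ℝ)*R*(t-1)*(1+β*r*t*γ) -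
          ((n:ℝ)*R*(t-1) + (n:ℝ)*β*r*R*t^2*γ - r*(β*R-((n:ℝ)-1))*(p-1))) := by
    field_simp
  rw [hfac]
  exact mul_nonneg (div_nonneg hd.le (by positivity)) hE
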